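/- Connectedness of the invariant set when both dimensions exceed one: if d > 1 and e > 1, then for every c ∈ ℝ^l the invariant set H(c) ⊆ ℝ^{l×d} × ℝ^{e×l}, consisting of all (W¹, W²) such that ∑_{i=1}^{d} (W¹_{ki})² − ∑_{j=1}^{e} (W²_{jk})² = c_k for every k ∈ {1,…,l}, is a connected subset (with the subspace topology). -/

import Mathlib

/-- The invariant set `H(c)`: parameters `(W¹, W²)` such that
`∑ᵢ (W¹_{ki})² − ∑ⱼ (W²_{jk})² = c_k` for every hidden neuron `k`. -/
def invariantSet (l d e : ℕ) (c : Fin l → ℝ) :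
    Set ((Fin l → Fin d → ℝ) × (Fin e → Fin l → ℝ)) :=
  {θ | ∀ k, ∑ i, (θ.1 k i) ^ 2 - ∑ j, (θ.2 j k) ^ 2 = c k}

section aux

private lemma sumsq_pos {n : ℕ} {x : Fin n → ℝ} (hx : x ≠ 0) :
    0 < ∑ i, x i ^ 2 := by
  obtain ⟨i, hi⟩ := Function.ne_iff.mp hx
  exact Finset.sum_pos' (fun j _ => sq_nonneg _) ⟨i, Finset.mem_univ i, pow_pos (abs_pos.mpr hi) 2 |>.trans_le (sq_abs (x i)).le⟩

private lemma sum_sq_smul {n : ℕ} (t : ℝ) (x : Fin n → ℝ) :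
    ∑ i, (t * x i) ^ 2 = t ^ 2 * ∑ i, x i ^ 2 := by
  rw [Finset.mul_sum]; congr 1; funext i; ring

/-- key scaling computation -/
private lemma scale_eq {n : ℕ} {x : Fin n → ℝ} (hx : x ≠ 0) {a : ℝ} (ha : 0 ≤ a) :
    ∑ i, (Real.sqrt (a / ∑ j, x j ^ 2) * x i) ^ 2 = a := by
  have hq : 0 < ∑ j, x j ^ 2 := sumsq_pos hx
  rw [sum_sq_smul, Real.sq_sqrt (by positivity), div_mul_cancel₀ _ (ne_of_gt hq)]

private lemma single_connected (d e : ℕ) (hd : 1 < d) (he : 1 < e) (c : ℝ) :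
    IsConnected {p : (Fin d → ℝ) × (Fin e → ℝ) |
      ∑ i, p.1 i ^ 2 - ∑ j, p.2 j ^ 2 = c} := by
  classical
  set D : Set ((Fin d → ℝ) × (Fin e → ℝ) × ℝ) :=
    ({(0 : Fin d → ℝ)}ᶜ) ×ˢ (({(0 : Fin e → ℝ)}ᶜ) ×ˢ Set.univ) with hDdef
  have hrankd : 1 < Module.rank ℝ (Fin d → ℝ) := by
    rw [rank_fin_fun]; exact_mod_cast hd
  have hranke : 1 < Module.rank ℝ (Fin e → ℝ) := by
    rw [rank_fin_fun]; exact_mod_cast he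
  have hD : IsConnected D :=
    ((isConnected_compl_singleton_of_one_lt_rank hrankd 0)).prod
      (((isConnected_compl_singleton_of_one_lt_rank hranke 0)).prod isConnected_univ)
  set cp : ℝ := max c 0 with hcp
  set cm : ℝ := max (-c) 0 with hcm
  have hcpm : cp - cm = c := by
    rcases le_total c 0 with h | h
    · simp [hcp, hcm, max_eq_right h, max_eq_left (neg_nonneg.mpr h)]
    · simp [hcp, hcm, max_eq_left h, max_eq_right (neg_nonpos.mpr h)]
  have hcp0 : 0 ≤ cp := le_max_right _ _
  have hcm0 : 0 ≤ cm := le_max_right _ _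
  set F : ((Fin d → ℝ) × (Fin e → ℝ) × ℝ) → (Fin d → ℝ) × (Fin e → ℝ) :=
    fun p => (Real.sqrt ((cp + p.2.2 ^ 2) / ∑ i, p.1 i ^ 2) • p.1,
              Real.sqrt ((cm + p.2.2 ^ 2) / ∑ j, p.2.1 j ^ 2) • p.2.1) with hF
  have hqc : ∀ (n : ℕ), Continuous (fun x : Fin n → ℝ => ∑ i, x i ^ 2) := by
    intro n
    exact continuous_finset_sum _ fun i _ => (continuous_apply i).pow 2
  have hFcont : ContinuousOn F D := by
    apply ContinuousOn.prodMk
    · apply ContinuousOn.fun_smul _ continuous_fst.continuousOn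
      apply Real.continuous_sqrt.comp_continuousOn
      apply ContinuousOn.div
      · exact (continuous_const.add ((continuous_snd.comp continuous_snd).pow 2)).continuousOn
      · exact ((hqc d).comp continuous_fst).continuousOn
      · rintro ⟨x, y, t⟩ ⟨hx, -⟩
        exact ne_of_gt (sumsq_pos (by simpa using hx))
    · apply ContinuousOn.fun_smul _ (continuous_fst.comp continuous_snd).continuousOn
      apply Real.continuous_sqrt.comp_continuousOn
      apply ContinuousOn.div
      · exact (continuous_const.add ((continuous_snd.comp continuous_snd).pow 2)).continuousOn
      · exact ((hqc e).comp (continuous_fst.comp continuous_snd)).continuousOn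
      · rintro ⟨x, y, t⟩ ⟨-, hy, -⟩
        exact ne_of_gt (sumsq_pos (by simpa using hy))
  have himg : F '' D = {p : (Fin d → ℝ) × (Fin e → ℝ) |
      ∑ i, p.1 i ^ 2 - ∑ j, p.2 j ^ 2 = c} := by
    apply Set.Subset.antisymm
    · rintro _ ⟨⟨x, y, t⟩, ⟨hx, hy, -⟩, rfl⟩
      have hx' : x ≠ 0 := by simpa using hx
      have hy' : y ≠ 0 := by simpa using hy
      simp only [Set.mem_setOf_eq, hF, Pi.smul_apply, smul_eq_mul]
      rw [scale_eq hx' (by positivity), scale_eq hy' (by positivity)]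
      linarith [hcpm]
    · rintro ⟨u, v⟩ huv
      simp only [Set.mem_setOf_eq] at huv
      have hqu : (0:ℝ) ≤ ∑ i, u i ^ 2 := Finset.sum_nonneg fun i _ => sq_nonneg _
      have hqv : (0:ℝ) ≤ ∑ j, v j ^ 2 := Finset.sum_nonneg fun j _ => sq_nonneg _
      have hvm : 0 ≤ (∑ j, v j ^ 2) - cm := by
        rcases le_total c 0 with h | h
        · have : cm = -c := by rw [hcm, max_eq_left (neg_nonneg.mpr h)]
          rw [this]; linarith
        · have : cm = 0 := by rw [hcm, max_eq_right (neg_nonpos.mpr h)]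
          rw [this]; linarith
      set σ : ℝ := Real.sqrt ((∑ j, v j ^ 2) - cm) with hσ
      have hσ2 : σ ^ 2 = (∑ j, v j ^ 2) - cm := Real.sq_sqrt hvm
      have hvm' : cm + σ ^ 2 = ∑ j, v j ^ 2 := by rw [hσ2]; ring
      have hum' : cp + σ ^ 2 = ∑ i, u i ^ 2 := by rw [hσ2]; linarith [hcpm]
      set x : Fin d → ℝ := if u = 0 then (fun _ => 1) else u with hx
      set y : Fin e → ℝ := if v = 0 then (fun _ => 1) else v with hy
      have hx0 : x ≠ 0 := by
        rw [hx]; split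
        · intro h; have := congrFun h ⟨0, by omega⟩; simpa using this
        · assumption
      have hy0 : y ≠ 0 := by
        rw [hy]; split
        · intro h; have := congrFun h ⟨0, by omega⟩; simpa using this
        · assumption
      refine ⟨(x, y, σ), ⟨by simpa using hx0, by simpa using hy0, Set.mem_univ _⟩, ?_⟩
      simp only [hF]
      have h1 : Real.sqrt ((cp + σ ^ 2) / ∑ i, x i ^ 2) • x = u := by
        rw [hum']
        by_cases hu : u = 0
        · have : ∑ i, u i ^ 2 = 0 := by rw [hu]; simp
          rw [this, zero_div, Real.sqrt_zero, zero_smul, hu]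
        · have hxu : x = u := by rw [hx, if_neg hu]
          rw [hxu, div_self (ne_of_gt (sumsq_pos hu)), Real.sqrt_one, one_smul]
      have h2 : Real.sqrt ((cm + σ ^ 2) / ∑ j, y j ^ 2) • y = v := by
        rw [hvm']
        by_cases hv : v = 0
        · have : ∑ j, v j ^ 2 = 0 := by rw [hv]; simp
          rw [this, zero_div, Real.sqrt_zero, zero_smul, hv]
        · have hyv : y = v := by rw [hy, if_neg hv]
          rw [hyv, div_self (ne_of_gt (sumsq_pos hv)), Real.sqrt_one, one_smul]
      exact Prod.ext h1 h2
  rw [← himg]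
  exact hD.image F hFcont

end aux

/-- If `d > 1` and `e > 1`, then the invariant set `H(c)` is
connected for every `c`. -/
theorem invariantSet_connected_of_dims_gt_one (l d e : ℕ) (hd : 1 < d) (he : 1 < e)
    (c : Fin l → ℝ) :
    IsConnected (invariantSet l d e c) := by
  classical
  set S : Fin l → Set ((Fin d → ℝ) × (Fin e → ℝ)) :=
    fun k => {p | ∑ i, p.1 i ^ 2 - ∑ j, p.2 j ^ 2 = c k} with hS
  have hpi : IsConnected (Set.univ.pi S) :=
    isConnected_univ_pi.mpr fun k => single_connected d e hd he (c k)
  set Φ : (∀ _ : Fin l, (Fin d → ℝ) × (Fin e → ℝ)) →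
      (Fin l → Fin d → ℝ) × (Fin e → Fin l → ℝ) :=
    fun f => (fun k => (f k).1, fun j k => (f k).2 j) with hΦ
  have hΦc : Continuous Φ := by
    apply Continuous.prodMk
    · exact continuous_pi fun k => (continuous_apply k).fst
    · exact continuous_pi fun j => continuous_pi fun k =>
        (continuous_apply j).comp ((continuous_apply k).snd)
  have himg : Φ '' (Set.univ.pi S) = invariantSet l d e c := by
    apply Set.Subset.antisymm
    · rintro _ ⟨f, hf, rfl⟩ k
      exact hf k (Set.mem_univ k)
    · intro θ hθ
      refine ⟨fun k => (θ.1 k, fun j => θ.2 j k), fun k _ => hθ k, ?_⟩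
      simp only [hΦ]
  rw [← himg]
  exact hpi.image Φ hΦc.continuousOn
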